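/- For any n ≥ 1 and k ≥ 0, the number of permutations π in S_n with des(π) = k and ipk(π) = 0 is equal to the binomial coefficient C(n−1, k). -/

import Mathlib

/-- The one-line notation of a permutation `π` of `{1,…,n}`, read as a function on 0-based
positions: `permWord π j = π_{j+1}` (values are 1-based; out-of-range positions give `0`). -/
def permWord {n : ℕ} (π : Equiv.Perm (Fin n)) (j : ℕ) : ℕ :=
  if h : j < n then ((π ⟨j, h⟩ : Fin n) : ℕ) + 1 else 0

/-- `π` contains `σ` as a consecutive pattern: some window of consecutive letters of `π`
has standardization `σ`, i.e. is order-isomorphic to the one-line word of `σ`. -/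
def ContainsPat {n m : ℕ} (π : Equiv.Perm (Fin n)) (σ : Equiv.Perm (Fin m)) : Prop :=
  ∃ i : ℕ, i + m ≤ n ∧ ∀ j k : Fin m,
    (permWord π (i + (j : ℕ)) < permWord π (i + (k : ℕ)) ↔ permWord σ j < permWord σ k)

/-- The number of peaks of `π`: 1-based indices `i` with `2 ≤ i ≤ n-1` and
`π_{i-1} < π_i > π_{i+1}`. -/
def pkCount {n : ℕ} (π : Equiv.Perm (Fin n)) : ℕ :=
  ((Finset.Icc 2 (n - 1)).filter fun i =>
    permWord π (i - 2) < permWord π (i - 1) ∧ permWord π i < permWord π (i - 1)).card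

/-- The number of left peaks of `π`: 1-based indices `i ∈ [n-1]` that are peaks,
or `i = 1` with `π_1 > π_2`. -/
def lpkCount {n : ℕ} (π : Equiv.Perm (Fin n)) : ℕ :=
  ((Finset.Icc 1 (n - 1)).filter fun i =>
    (2 ≤ i ∧ permWord π (i - 2) < permWord π (i - 1) ∧ permWord π i < permWord π (i - 1))
      ∨ (i = 1 ∧ permWord π 1 < permWord π 0)).card

/-- The number of peaks of `π⁻¹`. -/
def ipk {n : ℕ} (π : Equiv.Perm (Fin n)) : ℕ := pkCount π⁻¹

/-- The number of left peaks of `π⁻¹`. -/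
def ilpk {n : ℕ} (π : Equiv.Perm (Fin n)) : ℕ := lpkCount π⁻¹

/-- The number of descents of `π`: 1-based indices `i ∈ [n-1]` with `π_i > π_{i+1}`. -/
def desCount {n : ℕ} (π : Equiv.Perm (Fin n)) : ℕ :=
  ((Finset.Icc 1 (n - 1)).filter fun i => permWord π i < permWord π (i - 1)).card

theorem Equiv.Perm.apply_inv_self {α : Type*} (f : Equiv.Perm α) (x : α) : f (f⁻¹ x) = x :=
  Equiv.apply_symm_apply f x

theorem Equiv.Perm.inv_apply_self {α : Type*} (f : Equiv.Perm α) (x : α) : f⁻¹ (f x) = x :=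
  Equiv.symm_apply_apply f x

namespace Stmt6Aux
variable {n : ℕ}

lemma permWord_eq (π : Equiv.Perm (Fin n)) {a : ℕ} (ha : a < n) :
    permWord π a = (π ⟨a, ha⟩ : ℕ) + 1 := by simp [permWord, ha]

lemma permWord_pos (π : Equiv.Perm (Fin n)) {a : ℕ} (ha : a < n) : 1 ≤ permWord π a := by
  simp [permWord, ha]

lemma permWord_inj (π : Equiv.Perm (Fin n)) {a b : ℕ} (ha : a < n) (hb : b < n)
    (h : permWord π a = permWord π b) : a = b := by
  simp only [permWord, ha, hb, dif_pos, Nat.add_right_cancel_iff] at h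
  have := π.injective (Fin.ext h : π ⟨a, ha⟩ = π ⟨b, hb⟩)
  exact congrArg Fin.val this

lemma permWord_ne (π : Equiv.Perm (Fin n)) {a b : ℕ} (ha : a < n) (hb : b < n)
    (h : a ≠ b) : permWord π a ≠ permWord π b := fun e => h (permWord_inj π ha hb e)

/-- positions `≤ m` strictly decreasing, positions `≥ m` strictly increasing (adjacent steps). -/
def StepValley (σ : Equiv.Perm (Fin n)) (m : ℕ) : Prop :=
  (∀ q, q + 1 ≤ m → permWord σ (q + 1) < permWord σ q) ∧
  (∀ q, m ≤ q → q + 1 < n → permWord σ q < permWord σ (q + 1))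

lemma pkCount_eq_zero_of_stepValley (σ : Equiv.Perm (Fin n)) {m : ℕ} (hm : m < n)
    (hv : StepValley σ m) : pkCount σ = 0 := by
  rw [pkCount, Finset.card_eq_zero, Finset.filter_eq_empty_iff]
  intro i hi
  rw [Finset.mem_Icc] at hi
  rintro ⟨h1, h2⟩
  rcases le_or_gt (i - 1) m with h | h
  · have := hv.1 (i - 2) (by omega)
    rw [show i - 2 + 1 = i - 1 by omega] at this
    omega
  · have := hv.2 (i - 1) (by omega) (by omega)
    rw [show i - 1 + 1 = i by omega] at this
    omega

lemma noPeakAt (σ : Equiv.Perm (Fin n)) (hpk : pkCount σ = 0) {i : ℕ} (h2 : 2 ≤ i)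
    (h3 : i ≤ n - 1) :
    ¬(permWord σ (i - 2) < permWord σ (i - 1) ∧ permWord σ i < permWord σ (i - 1)) := by
  rw [pkCount, Finset.card_eq_zero, Finset.filter_eq_empty_iff] at hpk
  exact hpk (Finset.mem_Icc.2 ⟨h2, h3⟩)

lemma asc_prop (σ : Equiv.Perm (Fin n)) (hpk : pkCount σ = 0) {q : ℕ}
    (h : permWord σ q < permWord σ (q + 1)) :
    ∀ r, q ≤ r → r + 1 < n → permWord σ r < permWord σ (r + 1) := by
  intro r hr
  induction r, hr using Nat.le_induction with
  | base => intro _; exact h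
  | succ r hqr ih =>
    intro hrn
    have hr1 : r + 1 < n := by omega
    have hprev := ih hr1
    have hnp := noPeakAt σ hpk (i := r + 2) (by omega) (by omega)
    rw [show r + 2 - 2 = r by omega, show r + 2 - 1 = r + 1 by omega] at hnp
    have hne := permWord_ne σ (show r + 1 < n by omega) (show r + 2 < n by omega) (by omega)
    rw [show r + 1 + 1 = r + 2 by omega]
    omega

lemma stepValley_of_pkCount (σ : Equiv.Perm (Fin n)) (hpk : pkCount σ = 0) {m : ℕ}
    (hm : m < n) (h0 : permWord σ m = 1) : StepValley σ m := by
  constructor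
  · intro q hq
    by_contra hcon
    have hne := permWord_ne σ (show q < n by omega) (show q + 1 < n by omega) (by omega)
    have hlt : permWord σ q < permWord σ (q + 1) := by omega
    have := asc_prop σ hpk hlt (m - 1) (by omega) (by omega)
    rw [show m - 1 + 1 = m by omega, h0] at this
    have := permWord_pos σ (show m - 1 < n by omega)
    omega
  · intro q hq
    induction q, hq using Nat.le_induction with
    | base =>
      intro hmn
      have := permWord_pos σ hmn
      have hne := permWord_ne σ hm hmn (by omega)
      omega
    | succ q hmq ih =>
      intro hrn
      have hq1 : q + 1 < n := by omega
      have hprev := ih hq1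
      have hnp := noPeakAt σ hpk (i := q + 2) (by omega) (by omega)
      rw [show q + 2 - 2 = q by omega, show q + 2 - 1 = q + 1 by omega] at hnp
      have hne := permWord_ne σ hq1 (show q + 2 < n by omega) (by omega)
      rw [show q + 1 + 1 = q + 2 by omega]
      omega

lemma valley_left (σ : Equiv.Perm (Fin n)) {m : ℕ} (hv : StepValley σ m) :
    ∀ p q, p < q → q ≤ m → permWord σ q < permWord σ p := by
  intro p q hpq
  induction q, hpq using Nat.le_induction with
  | base => intro h; exact hv.1 p h
  | succ q hpq ih =>
    intro h
    have h1 := hv.1 q h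
    have h2 := ih (by omega)
    omega

lemma valley_right (σ : Equiv.Perm (Fin n)) {m : ℕ} (hv : StepValley σ m) :
    ∀ p q, m ≤ p → p < q → q < n → permWord σ p < permWord σ q := by
  intro p q hmp hpq
  induction q, hpq using Nat.le_induction with
  | base => intro h; exact hv.2 p hmp h
  | succ q hpq ih =>
    intro h
    have h1 := hv.2 q (by omega) h
    have h2 := ih (by omega)
    omega

lemma permWord_apply_inv (π : Equiv.Perm (Fin n)) (x : Fin n) :
    permWord π⁻¹ ((π x : Fin n) : ℕ) = (x : ℕ) + 1 := by
  rw [permWord_eq π⁻¹ (π x).isLt, Fin.eta, Equiv.Perm.inv_apply_self]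

lemma val_inv_facts (π : Equiv.Perm (Fin n)) {a : ℕ} (ha : a < n) :
    permWord π ((π⁻¹ ⟨a, ha⟩ : Fin n) : ℕ) = a + 1 := by
  rw [permWord_eq π (π⁻¹ ⟨a, ha⟩).isLt, Fin.eta, Equiv.Perm.apply_inv_self]

lemma val_inv_ne_zero (π : Equiv.Perm (Fin n)) (hn : 1 ≤ n) {a : ℕ} (ha : a < n)
    (hne : a ≠ ((π ⟨0, hn⟩ : Fin n) : ℕ)) : ((π⁻¹ ⟨a, ha⟩ : Fin n) : ℕ) ≠ 0 := by
  intro e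
  have h1 : π⁻¹ ⟨a, ha⟩ = ⟨0, hn⟩ := Fin.ext e
  have h2 := congrArg π h1
  rw [Equiv.Perm.apply_inv_self] at h2
  exact hne (congrArg Fin.val h2)

lemma pos_of_one (π : Equiv.Perm (Fin n)) {m : ℕ} (hm : m < n)
    (h0 : permWord π⁻¹ m = 1) : (π ⟨0, by omega⟩ : ℕ) = m := by
  rw [permWord_eq π⁻¹ hm] at h0
  have h1 : π⁻¹ ⟨m, hm⟩ = ⟨0, by omega⟩ := Fin.ext (show _ = 0 by omega)
  have := congrArg π h1
  rw [Equiv.Perm.apply_inv_self] at this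
  rw [← this]

lemma desc_iff (π : Equiv.Perm (Fin n)) {m : ℕ} (hm : m < n)
    (hv : StepValley π⁻¹ m) (h0 : permWord π⁻¹ m = 1)
    {i : ℕ} (h1 : 1 ≤ i) (h2 : i ≤ n - 1) :
    (permWord π i < permWord π (i - 1) ↔ permWord π i < permWord π 0) := by
  have hn : 1 ≤ n := by omega
  have hin : i < n := by omega
  have hi1 : i - 1 < n := by omega
  have hA : permWord π⁻¹ ((π ⟨i, hin⟩ : Fin n) : ℕ) = i + 1 := permWord_apply_inv π _
  have hB : permWord π⁻¹ ((π ⟨i - 1, hi1⟩ : Fin n) : ℕ) = (i - 1) + 1 := permWord_apply_inv π _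
  have h00 := pos_of_one π hm h0
  rw [permWord_eq π hin, permWord_eq π hi1, permWord_eq π (show 0 < n by omega), h00]
  have hne : (π ⟨i, hin⟩ : ℕ) ≠ (π ⟨i - 1, hi1⟩ : ℕ) := by
    intro e
    rw [e] at hA
    omega
  constructor
  · intro hlt
    by_contra hcon
    have := valley_right π⁻¹ hv ((π ⟨i, hin⟩ : Fin n) : ℕ) ((π ⟨i - 1, hi1⟩ : Fin n) : ℕ)
      (by omega) (by omega) (π ⟨i - 1, hi1⟩).isLt
    omega
  · intro hlt
    by_contra hcon
    have := valley_left π⁻¹ hv ((π ⟨i - 1, hi1⟩ : Fin n) : ℕ) ((π ⟨i, hin⟩ : Fin n) : ℕ)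
      (by omega) (by omega)
    omega

lemma card_left (π : Equiv.Perm (Fin n)) (hn : 1 ≤ n) :
    ((Finset.Icc 1 (n - 1)).filter fun i => permWord π i < permWord π 0).card
      = (π ⟨0, hn⟩ : ℕ) := by
  rw [← Fin.card_Iio (π ⟨0, hn⟩)]
  refine Finset.card_bij' (fun a ha => π ⟨a, by
      have := (Finset.mem_Icc.1 (Finset.mem_filter.1 ha).1).2; omega⟩)
    (fun b hb => ((π⁻¹ b : Fin n) : ℕ)) ?_ ?_ ?_ ?_
  · intro a ha
    simp only [Finset.mem_Iio, Fin.lt_def]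
    have h2 := (Finset.mem_filter.1 ha).2
    have ha1 := (Finset.mem_Icc.1 (Finset.mem_filter.1 ha).1)
    rw [permWord_eq π (show a < n by omega), permWord_eq π (show 0 < n by omega)] at h2
    omega
  · intro b hb
    simp only [Finset.mem_Iio, Fin.lt_def] at hb
    simp only [Finset.mem_filter, Finset.mem_Icc]
    have hval : permWord π ((π⁻¹ b : Fin n) : ℕ) = (b : ℕ) + 1 := by
      rw [permWord_eq π (π⁻¹ b).isLt, Fin.eta, Equiv.Perm.apply_inv_self]
    have hne0 : ((π⁻¹ b : Fin n) : ℕ) ≠ 0 := by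
      intro e
      have h3 : π⁻¹ b = ⟨0, hn⟩ := Fin.ext e
      have := congrArg π h3
      rw [Equiv.Perm.apply_inv_self] at this
      rw [this] at hb
      simp at hb
    have hlt := (π⁻¹ b).isLt
    refine ⟨⟨by omega, by omega⟩, ?_⟩
    rw [hval, permWord_eq π (show 0 < n by omega)]
    omega
  · intro a ha
    simp only [Equiv.Perm.inv_apply_self]
  · intro b hb
    simp only [Fin.eta, Equiv.Perm.apply_inv_self]

/-- The valley word associated to a set `S ⊆ {1,…,n-1}`: elements of `S` in decreasing
order, then `0`, then the remaining elements in increasing order. -/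
def vword (n : ℕ) (S : Finset ℕ) (p : ℕ) : ℕ :=
  if h : p < S.card then S.orderEmbOfFin rfl ⟨S.card - 1 - p, by omega⟩
  else if p = S.card then 0
  else if h3 : p - S.card - 1 < ((Finset.Icc 1 (n - 1)) \ S).card then
    ((Finset.Icc 1 (n - 1)) \ S).orderEmbOfFin rfl ⟨p - S.card - 1, h3⟩
  else 0

variable {S : Finset ℕ}

lemma card_T (hS : S ⊆ Finset.Icc 1 (n - 1)) :
    ((Finset.Icc 1 (n - 1)) \ S).card = n - 1 - S.card := by
  rw [Finset.card_sdiff_of_subset hS, Nat.card_Icc]; omega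

lemma card_S_le (hS : S ⊆ Finset.Icc 1 (n - 1)) : S.card ≤ n - 1 := by
  have := Finset.card_le_card hS
  rwa [Nat.card_Icc, show n - 1 + 1 - 1 = n - 1 by omega] at this

lemma vword_mem_S {p : ℕ} (hp : p < S.card) : vword n S p ∈ S := by
  rw [vword, dif_pos hp]
  exact Finset.orderEmbOfFin_mem _ _ _

lemma vword_self : vword n S S.card = 0 := by
  rw [vword, dif_neg (lt_irrefl _), if_pos rfl]

lemma vword_mem_T (hS : S ⊆ Finset.Icc 1 (n - 1)) {p : ℕ} (hp : S.card < p) (hpn : p < n) :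
    vword n S p ∈ (Finset.Icc 1 (n - 1)) \ S := by
  have h3 : p - S.card - 1 < ((Finset.Icc 1 (n - 1)) \ S).card := by
    rw [card_T hS]; omega
  rw [vword, dif_neg (by omega), if_neg (by omega), dif_pos h3]
  exact Finset.orderEmbOfFin_mem _ _ _

lemma vword_left_eq {p : ℕ} (hp : p < S.card) :
    vword n S p = S.orderEmbOfFin rfl ⟨S.card - 1 - p, by omega⟩ := by
  rw [vword, dif_pos hp]

lemma vword_right_eq (hS : S ⊆ Finset.Icc 1 (n - 1)) {p : ℕ} (hp : S.card < p) (hpn : p < n) :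
    vword n S p = ((Finset.Icc 1 (n - 1)) \ S).orderEmbOfFin rfl
      ⟨p - S.card - 1, by rw [card_T hS]; omega⟩ := by
  rw [vword, dif_neg (by omega), if_neg (by omega), dif_pos]

lemma mem_S_bounds (hS : S ⊆ Finset.Icc 1 (n - 1)) {x : ℕ} (hx : x ∈ S) :
    1 ≤ x ∧ x ≤ n - 1 := Finset.mem_Icc.1 (hS hx)

lemma mem_T_bounds {x : ℕ} (hx : x ∈ (Finset.Icc 1 (n - 1)) \ S) :
    1 ≤ x ∧ x ≤ n - 1 ∧ x ∉ S := by
  rcases Finset.mem_sdiff.1 hx with ⟨h1, h2⟩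
  exact ⟨(Finset.mem_Icc.1 h1).1, (Finset.mem_Icc.1 h1).2, h2⟩

lemma vword_lt (hn : 1 ≤ n) (hS : S ⊆ Finset.Icc 1 (n - 1)) (p : ℕ) : vword n S p < n := by
  rcases lt_trichotomy p S.card with h | h | h
  · have := (mem_S_bounds hS (vword_mem_S (n := n) h)).2; omega
  · rw [h, vword_self]; omega
  · rcases lt_or_ge p n with h2 | h2
    · have := (mem_T_bounds (vword_mem_T hS h h2)).2.1; omega
    · have h3 : ¬(p - S.card - 1 < ((Finset.Icc 1 (n - 1)) \ S).card) := by
        rw [card_T hS]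
        have := card_S_le hS
        omega
      rw [vword, dif_neg (by omega), if_neg (by omega), dif_neg h3]; omega

lemma vword_injOn (hS : S ⊆ Finset.Icc 1 (n - 1)) {p q : ℕ} (hp : p < n) (hq : q < n)
    (h : vword n S p = vword n S q) : p = q := by
  have hSz : ∀ x ∈ S, x ≠ 0 := fun x hx => by have := (mem_S_bounds hS hx).1; omega
  have hTz : ∀ x ∈ (Finset.Icc 1 (n - 1)) \ S, x ≠ 0 := fun x hx => by
    have := (mem_T_bounds hx).1; omega
  rcases lt_trichotomy p S.card with h1 | h1 | h1 <;>
    rcases lt_trichotomy q S.card with h2 | h2 | h2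
  · rw [vword, dif_pos h1, vword, dif_pos h2] at h
    have h3 : S.card - 1 - p = S.card - 1 - q :=
      congrArg Fin.val ((S.orderEmbOfFin rfl).injective h)
    omega
  · exfalso; exact hSz _ (vword_mem_S (n := n) h1) (by rw [h, h2, vword_self])
  · exfalso
    have := (mem_T_bounds (vword_mem_T hS h2 hq)).2.2
    exact this (h ▸ vword_mem_S (n := n) h1)
  · exfalso; exact hSz _ (vword_mem_S (n := n) h2) (by rw [← h, h1, vword_self])
  · omega
  · exfalso; exact hTz _ (vword_mem_T hS h2 hq) (by rw [← h, h1, vword_self])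
  · exfalso
    have := (mem_T_bounds (vword_mem_T hS h1 hp)).2.2
    exact this (h ▸ vword_mem_S (n := n) h2)
  · exfalso; exact hTz _ (vword_mem_T hS h1 hp) (by rw [h, h2, vword_self])
  · have h3p : p - S.card - 1 < ((Finset.Icc 1 (n - 1)) \ S).card := by rw [card_T hS]; omega
    have h3q : q - S.card - 1 < ((Finset.Icc 1 (n - 1)) \ S).card := by rw [card_T hS]; omega
    rw [vword, dif_neg (by omega), if_neg (by omega), dif_pos h3p,
      vword, dif_neg (by omega), if_neg (by omega), dif_pos h3q] at h
    have h3 : p - S.card - 1 = q - S.card - 1 :=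
      congrArg Fin.val ((((Finset.Icc 1 (n - 1)) \ S).orderEmbOfFin rfl).injective h)
    omega

/-- The valley permutation (as a map positions → values, 0-based). -/
noncomputable def valleyPerm (hn : 1 ≤ n) (hS : S ⊆ Finset.Icc 1 (n - 1)) :
    Equiv.Perm (Fin n) :=
  Equiv.ofBijective (fun p : Fin n => ⟨vword n S p, vword_lt hn hS p⟩)
    (Finite.injective_iff_bijective.1 (fun p q h => by
      exact Fin.ext (vword_injOn hS p.isLt q.isLt (congrArg Fin.val h))))

lemma valleyPerm_val (hn : 1 ≤ n) (hS : S ⊆ Finset.Icc 1 (n - 1)) (p : Fin n) :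
    ((valleyPerm hn hS) p : ℕ) = vword n S (p : ℕ) := rfl

lemma valleyPerm_permWord (hn : 1 ≤ n) (hS : S ⊆ Finset.Icc 1 (n - 1)) {p : ℕ} (hp : p < n) :
    permWord (valleyPerm hn hS) p = vword n S p + 1 := by
  simp [permWord, hp, valleyPerm, Equiv.ofBijective]

lemma stepValley_valleyPerm (hn : 1 ≤ n) (hS : S ⊆ Finset.Icc 1 (n - 1)) :
    StepValley (valleyPerm hn hS) S.card := by
  have hk := card_S_le hS
  constructor
  · intro q hq
    rw [valleyPerm_permWord hn hS (show q + 1 < n by omega),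
      valleyPerm_permWord hn hS (show q < n by omega)]
    have : vword n S (q + 1) < vword n S q := by
      rcases eq_or_lt_of_le hq with h | h
      · have h0 : vword n S (q + 1) = 0 := by rw [h, vword_self]
        have h1 := (mem_S_bounds hS (vword_mem_S (n := n) (show q < S.card by omega))).1
        omega
      · rw [vword_left_eq (show q + 1 < S.card by omega),
          vword_left_eq (show q < S.card by omega)]
        exact (S.orderEmbOfFin rfl).strictMono (Fin.mk_lt_mk.2 (by omega))
    omega
  · intro q hq hqn
    rw [valleyPerm_permWord hn hS (show q < n by omega), valleyPerm_permWord hn hS hqn]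
    have : vword n S q < vword n S (q + 1) := by
      rcases eq_or_lt_of_le hq with h | h
      · have h0 : vword n S q = 0 := by rw [← h, vword_self]
        have h1 := (mem_T_bounds (vword_mem_T hS (show S.card < q + 1 by omega) hqn)).1
        omega
      · rw [vword_right_eq hS h (by omega), vword_right_eq hS (by omega) hqn]
        exact (((Finset.Icc 1 (n - 1)) \ S).orderEmbOfFin rfl).strictMono
          (Fin.mk_lt_mk.2 (by omega))
    omega

lemma valleyPerm_word_card (hn : 1 ≤ n) (hS : S ⊆ Finset.Icc 1 (n - 1)) :
    permWord (valleyPerm hn hS) S.card = 1 := by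
  have hk : S.card < n := by have := card_S_le hS; omega
  rw [valleyPerm_permWord hn hS hk, vword_self]

lemma permWord_zero_valleyInv (hn : 1 ≤ n) (hS : S ⊆ Finset.Icc 1 (n - 1)) :
    permWord (valleyPerm hn hS)⁻¹ 0 = S.card + 1 := by
  have hk : S.card < n := by have := card_S_le hS; omega
  have h0 : permWord ((valleyPerm hn hS)⁻¹)⁻¹ S.card = 1 := by
    rw [inv_inv]; exact valleyPerm_word_card hn hS
  have := pos_of_one ((valleyPerm hn hS)⁻¹) hk h0
  rw [permWord_eq _ (show 0 < n by omega), this]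

lemma filter_valleyPerm (hn : 1 ≤ n) (hS : S ⊆ Finset.Icc 1 (n - 1)) :
    ((Finset.Icc 1 (n - 1)).filter fun i =>
      permWord (valleyPerm hn hS)⁻¹ i < permWord (valleyPerm hn hS)⁻¹ 0) = S := by
  have hk : S.card < n := by have := card_S_le hS; omega
  ext i
  rw [Finset.mem_filter, Finset.mem_Icc, permWord_zero_valleyInv hn hS]
  constructor
  · rintro ⟨⟨h1, h2⟩, hcond⟩
    have hin : i < n := by omega
    rw [permWord_eq _ hin] at hcond
    have ha : ((valleyPerm hn hS)⁻¹ ⟨i, hin⟩ : ℕ) < S.card := by omega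
    have hv : vword n S (((valleyPerm hn hS)⁻¹ ⟨i, hin⟩ : Fin n) : ℕ) = i := by
      have := valleyPerm_val hn hS ((valleyPerm hn hS)⁻¹ ⟨i, hin⟩)
      rw [Equiv.Perm.apply_inv_self] at this
      exact this.symm
    rw [← hv]
    exact vword_mem_S (n := n) ha
  · intro hiS
    have hb := mem_S_bounds hS hiS
    have hin : i < n := by omega
    refine ⟨⟨hb.1, hb.2⟩, ?_⟩
    have : (i : ℕ) ∈ Set.range (S.orderEmbOfFin rfl) := by
      rw [Finset.range_orderEmbOfFin]; exact hiS
    obtain ⟨j, hj⟩ := this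
    have hk1 : 1 ≤ S.card := by have := j.isLt; omega
    have hp : S.card - 1 - (j : ℕ) < S.card := by omega
    have hpn : S.card - 1 - (j : ℕ) < n := by omega
    have hvp : vword n S (S.card - 1 - (j : ℕ)) = i := by
      rw [vword_left_eq hp]
      have he : (⟨S.card - 1 - (S.card - 1 - (j : ℕ)), by omega⟩ : Fin S.card) = j :=
        Fin.ext (show S.card - 1 - (S.card - 1 - (j : ℕ)) = (j : ℕ) by have := j.isLt; omega)
      rw [he, hj]
    have hσ : (valleyPerm hn hS) ⟨S.card - 1 - (j : ℕ), hpn⟩ = ⟨i, hin⟩ := by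
      apply Fin.ext
      rw [valleyPerm_val hn hS]
      exact hvp
    have : (valleyPerm hn hS)⁻¹ ⟨i, hin⟩ = ⟨S.card - 1 - (j : ℕ), hpn⟩ := by
      rw [← hσ, Equiv.Perm.inv_apply_self]
    rw [permWord_eq _ hin, this]
    show S.card - 1 - (j : ℕ) + 1 < S.card + 1
    omega

lemma desCount_valleyPerm (hn : 1 ≤ n) (hS : S ⊆ Finset.Icc 1 (n - 1)) :
    desCount (valleyPerm hn hS)⁻¹ = S.card := by
  have hk : S.card < n := by have := card_S_le hS; omega
  have hv : StepValley ((valleyPerm hn hS)⁻¹)⁻¹ S.card := by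
    rw [inv_inv]; exact stepValley_valleyPerm hn hS
  have h0 : permWord ((valleyPerm hn hS)⁻¹)⁻¹ S.card = 1 := by
    rw [inv_inv]; exact valleyPerm_word_card hn hS
  have hcongr : ∀ i ∈ Finset.Icc 1 (n - 1),
      (permWord (valleyPerm hn hS)⁻¹ i < permWord (valleyPerm hn hS)⁻¹ (i - 1) ↔
        permWord (valleyPerm hn hS)⁻¹ i < permWord (valleyPerm hn hS)⁻¹ 0) := by
    intro i hi
    rcases Finset.mem_Icc.1 hi with ⟨h1, h2⟩
    exact desc_iff ((valleyPerm hn hS)⁻¹) hk hv h0 h1 h2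
  rw [desCount, Finset.filter_congr hcongr, filter_valleyPerm hn hS]

lemma ipk_valleyPerm (hn : 1 ≤ n) (hS : S ⊆ Finset.Icc 1 (n - 1)) :
    ipk (valleyPerm hn hS)⁻¹ = 0 := by
  have hk : S.card < n := by have := card_S_le hS; omega
  rw [ipk, inv_inv]
  exact pkCount_eq_zero_of_stepValley _ hk (stepValley_valleyPerm hn hS)

lemma exists_valley (hn : 1 ≤ n) (π : Equiv.Perm (Fin n)) (hpk : pkCount π⁻¹ = 0) :
    ∃ (S : Finset ℕ) (hS : S ⊆ Finset.Icc 1 (n - 1)), π = (valleyPerm hn hS)⁻¹ := by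
  set m := ((π ⟨0, hn⟩ : Fin n) : ℕ) with hmdef
  have hm : m < n := (π ⟨0, hn⟩).isLt
  have h0 : permWord π⁻¹ m = 1 := permWord_apply_inv π ⟨0, hn⟩
  have hv := stepValley_of_pkCount π⁻¹ hpk hm h0
  set S := ((Finset.Icc 1 (n - 1)).filter fun i => permWord π i < permWord π 0) with hSdef
  have hSsub : S ⊆ Finset.Icc 1 (n - 1) := Finset.filter_subset _ _
  have hcard : S.card = m := card_left π hn
  have hpw0 : permWord π 0 = m + 1 := by rw [permWord_eq π (show 0 < n by omega)]
  clear_value m S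
  have memS_of : ∀ a : ℕ, 1 ≤ a → a ≤ n - 1 → permWord π a < permWord π 0 → a ∈ S := by
    intro a h1 h2 h3
    rw [hSdef, Finset.mem_filter, Finset.mem_Icc]
    exact ⟨⟨h1, h2⟩, h3⟩
  have not_memS_of : ∀ a : ℕ, ¬ permWord π a < permWord π 0 → a ∉ S := by
    intro a hcond hmem
    rw [hSdef, Finset.mem_filter] at hmem
    exact hcond hmem.2
  refine ⟨S, hSsub, ?_⟩
  have main : valleyPerm hn hSsub = π⁻¹ := by
    apply Equiv.ext
    intro p
    apply Fin.ext
    rw [valleyPerm_val hn hSsub]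
    rcases lt_trichotomy ((p : ℕ)) S.card with hlt | heq | hgt
    · -- left part
      have hmem : ∀ j : Fin S.card,
          ((π⁻¹ ⟨m - 1 - (j : ℕ), by have := j.isLt; omega⟩ : Fin n) : ℕ) ∈ S := by
        intro j
        have hjm : (j : ℕ) < m := by have := j.isLt; omega
        have hidx : m - 1 - (j : ℕ) < n := by omega
        show ((π⁻¹ ⟨m - 1 - (j : ℕ), hidx⟩ : Fin n) : ℕ) ∈ S
        have h1 := val_inv_facts π hidx
        have h2 := val_inv_ne_zero π hn hidx (by omega)
        have h3 := (π⁻¹ (⟨m - 1 - (j : ℕ), hidx⟩ : Fin n)).isLt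
        exact memS_of _ (by omega) (by omega) (by rw [h1, hpw0]; omega)
      have hmono : StrictMono (fun j : Fin S.card =>
          ((π⁻¹ ⟨m - 1 - (j : ℕ), by have := j.isLt; omega⟩ : Fin n) : ℕ)) := by
        intro j j' hjj
        have hja : (j : ℕ) < m := by have := j.isLt; omega
        have hjb : (j' : ℕ) < m := by have := j'.isLt; omega
        have hidj : m - 1 - (j : ℕ) < n := by omega
        have hidj' : m - 1 - (j' : ℕ) < n := by omega
        show ((π⁻¹ ⟨m - 1 - (j : ℕ), hidj⟩ : Fin n) : ℕ)
          < ((π⁻¹ ⟨m - 1 - (j' : ℕ), hidj'⟩ : Fin n) : ℕ)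
        have hh := valley_left π⁻¹ hv (m - 1 - (j' : ℕ)) (m - 1 - (j : ℕ))
          (by have := Fin.lt_def.1 hjj; omega) (by omega)
        rw [permWord_eq π⁻¹ hidj, permWord_eq π⁻¹ hidj'] at hh
        omega
      have huniq := Finset.orderEmbOfFin_unique (rfl : S.card = S.card) hmem hmono
      rw [vword_left_eq hlt, ← huniq]
      have hidp : m - 1 - (S.card - 1 - (p : ℕ)) < n := by omega
      show ((π⁻¹ ⟨m - 1 - (S.card - 1 - (p : ℕ)), hidp⟩ : Fin n) : ℕ) = _
      have hpe : (⟨m - 1 - (S.card - 1 - (p : ℕ)), hidp⟩ : Fin n) = p :=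
        Fin.ext (show m - 1 - (S.card - 1 - (p : ℕ)) = (p : ℕ) by omega)
      rw [hpe]
    · -- middle
      rw [heq, vword_self]
      have hpm : p = π ⟨0, hn⟩ := Fin.ext (by rw [← hmdef]; omega)
      rw [hpm, Equiv.Perm.inv_apply_self]
    · -- right part
      have hcT : (Finset.Icc 1 (n - 1) \ S).card = n - 1 - m := by
        rw [card_T hSsub, hcard]
      have hmem : ∀ j : Fin ((Finset.Icc 1 (n - 1) \ S).card),
          ((π⁻¹ ⟨m + 1 + (j : ℕ), by have h4 := j.isLt; omega⟩ : Fin n) : ℕ)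
            ∈ Finset.Icc 1 (n - 1) \ S := by
        intro j
        have hjm : (j : ℕ) < n - 1 - m := by have h4 := j.isLt; omega
        have hidx : m + 1 + (j : ℕ) < n := by omega
        show ((π⁻¹ ⟨m + 1 + (j : ℕ), hidx⟩ : Fin n) : ℕ) ∈ Finset.Icc 1 (n - 1) \ S
        have h1 := val_inv_facts π hidx
        have h2 := val_inv_ne_zero π hn hidx (by omega)
        have h3 := (π⁻¹ (⟨m + 1 + (j : ℕ), hidx⟩ : Fin n)).isLt
        exact Finset.mem_sdiff.2 ⟨Finset.mem_Icc.2 ⟨by omega, by omega⟩,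
          not_memS_of _ (by rw [h1, hpw0]; omega)⟩
      have hmono : StrictMono (fun j : Fin ((Finset.Icc 1 (n - 1) \ S).card) =>
          ((π⁻¹ ⟨m + 1 + (j : ℕ), by have h4 := j.isLt; omega⟩ : Fin n) : ℕ)) := by
        intro j j' hjj
        have hja : (j : ℕ) < n - 1 - m := by have h4 := j.isLt; omega
        have hjb : (j' : ℕ) < n - 1 - m := by have h4 := j'.isLt; omega
        have hidj : m + 1 + (j : ℕ) < n := by omega
        have hidj' : m + 1 + (j' : ℕ) < n := by omega
        show ((π⁻¹ ⟨m + 1 + (j : ℕ), hidj⟩ : Fin n) : ℕ)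
          < ((π⁻¹ ⟨m + 1 + (j' : ℕ), hidj'⟩ : Fin n) : ℕ)
        have hh := valley_right π⁻¹ hv (m + 1 + (j : ℕ)) (m + 1 + (j' : ℕ))
          (by omega) (by have := Fin.lt_def.1 hjj; omega) hidj'
        rw [permWord_eq π⁻¹ hidj, permWord_eq π⁻¹ hidj'] at hh
        omega
      have huniq := Finset.orderEmbOfFin_unique
        (rfl : (Finset.Icc 1 (n - 1) \ S).card = (Finset.Icc 1 (n - 1) \ S).card) hmem hmono
      rw [vword_right_eq hSsub hgt p.isLt, ← huniq]
      have hidp : m + 1 + ((p : ℕ) - S.card - 1) < n := by have := p.isLt; omega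
      show ((π⁻¹ ⟨m + 1 + ((p : ℕ) - S.card - 1), hidp⟩ : Fin n) : ℕ) = _
      have hpe : (⟨m + 1 + ((p : ℕ) - S.card - 1), hidp⟩ : Fin n) = p :=
        Fin.ext (show m + 1 + ((p : ℕ) - S.card - 1) = (p : ℕ) by omega)
      rw [hpe]
  rw [main, inv_inv]


end Stmt6Aux

open Stmt6Aux in
/-- For any `n ≥ 1` and `k ≥ 0`, the number of permutations `π ∈ S_n` with `des(π) = k`
whose inverse has no peaks is the binomial coefficient `C(n-1, k)`. -/
theorem stmt6 (n k : ℕ) (hn : 1 ≤ n) :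
    Nat.card {π : Equiv.Perm (Fin n) // desCount π = k ∧ ipk π = 0}
      = Nat.choose (n - 1) k := by
  classical
  have h1 : (((Finset.Icc 1 (n - 1)).powersetCard k).card) = (n - 1).choose k := by
    rw [Finset.card_powersetCard, Nat.card_Icc]
    have h2 : n - 1 + 1 - 1 = n - 1 := by omega
    rw [h2]
  rw [Nat.card_eq_fintype_card, Fintype.card_subtype, ← h1]
  refine (Finset.card_bij
    (fun S hSmem => (valleyPerm hn (Finset.mem_powersetCard.1 hSmem).1)⁻¹) ?_ ?_ ?_).symm
  · intro S hSmem
    obtain ⟨hSsub, hScard⟩ := Finset.mem_powersetCard.1 hSmem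
    refine Finset.mem_filter.2 ⟨Finset.mem_univ _, ?_, ?_⟩
    · rw [desCount_valleyPerm hn hSsub, hScard]
    · exact ipk_valleyPerm hn hSsub
  · intro S1 h1' S2 h2' heq
    have heq' : (valleyPerm hn (Finset.mem_powersetCard.1 h1').1)⁻¹
        = (valleyPerm hn (Finset.mem_powersetCard.1 h2').1)⁻¹ := heq
    have e1 := filter_valleyPerm hn (Finset.mem_powersetCard.1 h1').1
    have e2 := filter_valleyPerm hn (Finset.mem_powersetCard.1 h2').1
    rw [← e1, ← e2, heq']
  · intro π hπ
    obtain ⟨-, hdes, hipk⟩ := Finset.mem_filter.1 hπ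
    have hpk : pkCount π⁻¹ = 0 := hipk
    obtain ⟨S, hSsub, hπeq⟩ := exists_valley hn π hpk
    have hScard : S.card = k := by
      rw [hπeq, desCount_valleyPerm hn hSsub] at hdes
      exact hdes
    exact ⟨S, Finset.mem_powersetCard.2 ⟨hSsub, hScard⟩, hπeq.symm⟩
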